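/- In the known-variance two-nested-model setting, the minimal (over ζ ∈ ℝ) coverage probability of the interval β̂_{1·M̂} ± K σ_{1·M̂} for β_{1·M̂} is a continuous function of ρ on (−1,1) that equals Δ(0,K) = 2Φ(K)−1 at ρ = 0; consequently, if K = K_N (the (1−α/2)-quantile of N(0,1)) and ρ = 0, the naive interval has exact minimal coverage 1−α. -/

import Mathlib

open MeasureTheory ProbabilityTheory
open scoped ENNReal NNReal

set_option maxHeartbeats 1000000

/-- Standard normal cumulative distribution function `Φ`. -/
noncomputable def Phi (x : ℝ) : ℝ := ((gaussianReal 0 1) (Set.Iic x)).toReal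

/-- `Δ(x, c) = Φ(x + c) − Φ(x − c)`. -/
noncomputable def Dlt (x c : ℝ) : ℝ := Phi (x + c) - Phi (x - c)

/-- The coverage-probability formula of Proposition 1 (known variance):
`g(ζ,ρ) = Δ(0,K)Δ(ζ,C) + ∫_{−K}^{K}[1 − Δ((ζ+ρz)/√(1−ρ²), C/√(1−ρ²))]φ(z)dz`. -/
noncomputable def gcov (K C ζ ρ : ℝ) : ℝ :=
  Dlt 0 K * Dlt ζ C +
    ∫ z in Set.Icc (-K) K,
      (1 - Dlt ((ζ + ρ * z) / Real.sqrt (1 - ρ ^ 2)) (C / Real.sqrt (1 - ρ ^ 2))) *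
        gaussianPDFReal 0 1 z

/-- Minimal (over `ζ ∈ ℝ`) coverage probability of the interval
`β̂_{1·M̂} ± K σ_{1·M̂}` for `β_{1·M̂}`, as a function of `ρ`. -/
noncomputable def minCov (K C ρ : ℝ) : ℝ := ⨅ ζ : ℝ, gcov K C ζ ρ


lemma Phi_eq_integral (x : ℝ) : Phi x = ∫ t in Set.Iic x, gaussianPDFReal 0 1 t := by
  rw [Phi, gaussianReal_apply_eq_integral 0 one_ne_zero, ENNReal.toReal_ofReal]
  exact integral_nonneg fun t => gaussianPDFReal_nonneg 0 1 t

lemma Phi_nonneg (x : ℝ) : 0 ≤ Phi x := ENNReal.toReal_nonneg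

lemma Phi_le_one (x : ℝ) : Phi x ≤ 1 := by
  rw [Phi]
  have h : (gaussianReal 0 1) (Set.Iic x) ≤ 1 := prob_le_one
  exact ENNReal.toReal_le_of_le_ofReal one_pos.le (by simpa using h)

lemma Phi_mono : Monotone Phi := fun a b h => by
  rw [Phi, Phi]
  exact (ENNReal.toReal_le_toReal (measure_ne_top _ _) (measure_ne_top _ _)).2
    (measure_mono (Set.Iic_subset_Iic.2 h))

lemma pdf_integrable : Integrable (gaussianPDFReal 0 1) := integrable_gaussianPDFReal 0 1

lemma pdf_le_one (x : ℝ) : gaussianPDFReal 0 1 x ≤ 1 := by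
  rw [gaussianPDFReal_def]
  simp only [NNReal.coe_one, mul_one, sub_zero]
  have h1 : Real.exp (-x ^ 2 / 2) ≤ 1 := by
    rw [Real.exp_le_one_iff]
    nlinarith [sq_nonneg x]
  have h2 : (1:ℝ) ≤ Real.sqrt (2 * Real.pi) := by
    rw [show (1:ℝ) = Real.sqrt 1 by simp]
    exact Real.sqrt_le_sqrt (by nlinarith [Real.pi_gt_three])
  have h3 : (Real.sqrt (2 * Real.pi))⁻¹ ≤ 1 := inv_le_one_of_one_le₀ h2
  have h4 : (0:ℝ) ≤ (Real.sqrt (2 * Real.pi))⁻¹ := by positivity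
  calc (Real.sqrt (2 * Real.pi))⁻¹ * Real.exp (-x ^ 2 / 2)
      ≤ (Real.sqrt (2 * Real.pi))⁻¹ * 1 := by nlinarith [Real.exp_pos (-x^2/2)]
    _ ≤ 1 := by linarith

lemma pdf_continuous : Continuous (gaussianPDFReal 0 1) := by
  rw [gaussianPDFReal_def]
  fun_prop

lemma Phi_sub_eq (a b : ℝ) (h : a ≤ b) :
    Phi b - Phi a = ∫ t in Set.Ioc a b, gaussianPDFReal 0 1 t := by
  have hu : Set.Iic a ∪ Set.Ioc a b = Set.Iic b := Set.Iic_union_Ioc_eq_Iic h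
  have hd : Disjoint (Set.Iic a) (Set.Ioc a b) := by
    apply Set.disjoint_left.2
    intro x hx hx2
    exact absurd hx2.1 (not_lt.2 hx)
  have := setIntegral_union hd measurableSet_Ioc
    (pdf_integrable.integrableOn (s := Set.Iic a))
    (pdf_integrable.integrableOn (s := Set.Ioc a b))
  rw [Phi_eq_integral, Phi_eq_integral, ← hu, this]
  ring



lemma Phi_lip (a b : ℝ) : |Phi a - Phi b| ≤ |a - b| := by
  wlog h : b ≤ a with H
  · rw [abs_sub_comm, abs_sub_comm a b]; exact H b a (le_of_not_ge h)
  rw [Phi_sub_eq b a h]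
  have h1 : ∫ t in Set.Ioc b a, gaussianPDFReal 0 1 t ≤ ∫ _t in Set.Ioc b a, (1:ℝ) := by
    apply setIntegral_mono_on (pdf_integrable.integrableOn)
      (integrableOn_const (by simp [Real.volume_Ioc]))
      measurableSet_Ioc
    exact fun x _ => pdf_le_one x
  have h2 : ∫ _t in Set.Ioc b a, (1:ℝ) = a - b := by
    simp [Real.volume_Ioc, ENNReal.toReal_ofReal (sub_nonneg.2 h), h]
  have h3 : 0 ≤ ∫ t in Set.Ioc b a, gaussianPDFReal 0 1 t :=
    integral_nonneg fun t => gaussianPDFReal_nonneg 0 1 t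
  rw [abs_of_nonneg h3, abs_of_nonneg (sub_nonneg.2 h)]
  linarith

lemma Phi_continuous : Continuous Phi := by
  apply LipschitzWith.continuous (K := 1)
  apply LipschitzWith.of_dist_le_mul
  intro a b
  rw [Real.dist_eq, Real.dist_eq, NNReal.coe_one, one_mul]
  exact Phi_lip a b

lemma pdf_even (x : ℝ) : gaussianPDFReal 0 1 (-x) = gaussianPDFReal 0 1 x := by
  simp only [gaussianPDFReal]
  ring_nf

lemma Phi_neg (x : ℝ) : Phi (-x) = 1 - Phi x := by
  have h1 : ∫ t in Set.Iic (-x), gaussianPDFReal 0 1 t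
      = ∫ t in Set.Ioi x, gaussianPDFReal 0 1 t := by
    calc ∫ t in Set.Iic (-x), gaussianPDFReal 0 1 t
        = ∫ t in Set.Iic (-x), gaussianPDFReal 0 1 (-t) := by simp_rw [pdf_even]
      _ = ∫ t in Set.Ioi (-(-x)), gaussianPDFReal 0 1 t := integral_comp_neg_Iic _ _
      _ = ∫ t in Set.Ioi x, gaussianPDFReal 0 1 t := by rw [neg_neg]
  have h2 : Phi x + ∫ t in Set.Ioi x, gaussianPDFReal 0 1 t = 1 := by
    rw [Phi_eq_integral]
    have hd : Disjoint (Set.Iic x) (Set.Ioi x) := by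
      apply Set.disjoint_left.2
      intro y hy hy2
      simp only [Set.mem_Ioi] at hy2
      exact absurd hy2 (not_lt.2 hy)
    rw [← setIntegral_union hd measurableSet_Ioi
      (pdf_integrable.integrableOn) (pdf_integrable.integrableOn),
      Set.Iic_union_Ioi, setIntegral_univ, integral_gaussianPDFReal_eq_one 0 one_ne_zero]
  rw [Phi_eq_integral, h1]
  linarith

lemma Phi_zero : Phi 0 = 1 / 2 := by
  have := Phi_neg 0
  rw [neg_zero] at this
  linarith

lemma Phi_tendsto : Filter.Tendsto Phi Filter.atTop (nhds 1) := by
  have h := tendsto_measure_Iic_atTop (gaussianReal 0 1)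
  rw [measure_univ] at h
  have h2 : Filter.Tendsto (fun x => ((gaussianReal 0 1) (Set.Iic x)).toReal)
      Filter.atTop (nhds ((1 : ℝ≥0∞).toReal)) :=
    (ENNReal.tendsto_toReal ENNReal.one_ne_top).comp h
  show Filter.Tendsto (fun x => ((gaussianReal 0 1) (Set.Iic x)).toReal) _ _
  simpa using h2



lemma Dlt_nonneg {x c : ℝ} (hc : 0 ≤ c) : 0 ≤ Dlt x c :=
  sub_nonneg.2 (Phi_mono (by linarith))

lemma Dlt_le_one (x c : ℝ) : Dlt x c ≤ 1 := by
  have := Phi_le_one (x + c); have := Phi_nonneg (x - c); rw [Dlt]; linarith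

lemma Dlt_even (x c : ℝ) : Dlt (-x) c = Dlt x c := by
  rw [Dlt, Dlt, show -x + c = -(x - c) by ring, show -x - c = -(x + c) by ring,
    Phi_neg, Phi_neg]
  ring

lemma Dlt_tail {x c : ℝ} (hx : 0 ≤ x) : Dlt x c ≤ 1 - Phi (x - c) := by
  rw [Dlt]; have := Phi_le_one (x + c); linarith

lemma Dlt_tail_abs (x c : ℝ) : Dlt x c ≤ 1 - Phi (|x| - c) := by
  rcases abs_cases x with ⟨h, h2⟩ | ⟨h, h2⟩
  · rw [h]; exact Dlt_tail (by linarith)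
  · rw [h, ← Dlt_even]; exact Dlt_tail (by linarith)

lemma Dlt_lip (x c x' c' : ℝ) :
    |Dlt x c - Dlt x' c'| ≤ (|x - x'| + |c - c'|) + (|x - x'| + |c - c'|) := by
  rw [Dlt, Dlt]
  have h1 := Phi_lip (x + c) (x' + c')
  have h2 := Phi_lip (x - c) (x' - c')
  have e1 : |x + c - (x' + c')| ≤ |x - x'| + |c - c'| := by
    rw [show x + c - (x' + c') = (x - x') + (c - c') by ring]; exact abs_add_le _ _
  have e2 : |x - c - (x' - c')| ≤ |x - x'| + |c - c'| := by
    rw [show x - c - (x' - c') = (x - x') - (c - c') by ring]; exact abs_sub _ _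
  calc |Phi (x + c) - Phi (x - c) - (Phi (x' + c') - Phi (x' - c'))|
      ≤ |Phi (x + c) - Phi (x' + c')| + |Phi (x - c) - Phi (x' - c')| := by
        rw [show Phi (x + c) - Phi (x - c) - (Phi (x' + c') - Phi (x' - c'))
          = (Phi (x + c) - Phi (x' + c')) - (Phi (x - c) - Phi (x' - c')) by ring]
        exact abs_sub _ _
    _ ≤ _ := by have := h1.trans e1; have := h2.trans e2; linarith

lemma Dlt_cont_comp {f : ℝ → ℝ} (hf : Continuous f) (c : ℝ) :
    Continuous fun z => Dlt (f z) c := by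
  unfold Dlt
  exact (Phi_continuous.comp (hf.add continuous_const)).sub
    (Phi_continuous.comp (hf.sub continuous_const))

lemma integral_pdf_Icc (K : ℝ) (hK : 0 ≤ K) :
    ∫ t in Set.Icc (-K) K, gaussianPDFReal 0 1 t = Phi K - Phi (-K) := by
  rw [integral_Icc_eq_integral_Ioc, Phi_sub_eq (-K) K (by linarith)]


lemma divBound (A B u v m : ℝ) (hm : 0 < m) (hu : m ≤ u) (hv : m ≤ v) :
    |A / u - B / v| ≤ |A - B| / m + |B| * |u - v| / (m * m) := by
  have hu0 : 0 < u := hm.trans_le hu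
  have hv0 : 0 < v := hm.trans_le hv
  have e : A / u - B / v = (A - B) / u + B * (v - u) / (u * v) := by
    field_simp
    ring
  have t1 : |(A - B) / u| ≤ |A - B| / m := by
    rw [abs_div, abs_of_pos hu0]
    gcongr
  have t2 : |B * (v - u) / (u * v)| ≤ |B| * |u - v| / (m * m) := by
    rw [abs_div, abs_mul, abs_of_pos (mul_pos hu0 hv0), abs_sub_comm v u]
    gcongr
  calc |A / u - B / v| = |(A - B) / u + B * (v - u) / (u * v)| := by rw [e]
    _ ≤ |(A - B) / u| + |B * (v - u) / (u * v)| := abs_add_le _ _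
    _ ≤ _ := add_le_add t1 t2

lemma sqrt_diff (a b m : ℝ) (ha : 0 ≤ a) (hb : 0 ≤ b) (hm : 0 < m)
    (hsa : m ≤ Real.sqrt a) (hsb : m ≤ Real.sqrt b) :
    |Real.sqrt a - Real.sqrt b| ≤ |a - b| / (m + m) := by
  have h1 : Real.sqrt a * Real.sqrt a = a := Real.mul_self_sqrt ha
  have h2 : Real.sqrt b * Real.sqrt b = b := Real.mul_self_sqrt hb
  have key : (Real.sqrt a - Real.sqrt b) * (Real.sqrt a + Real.sqrt b) = a - b := by
    calc (Real.sqrt a - Real.sqrt b) * (Real.sqrt a + Real.sqrt b)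
        = Real.sqrt a * Real.sqrt a - Real.sqrt b * Real.sqrt b := by ring
      _ = a - b := by rw [h1, h2]
  have hpos : 0 < Real.sqrt a + Real.sqrt b := by linarith
  have habs : |Real.sqrt a - Real.sqrt b| * (Real.sqrt a + Real.sqrt b) = |a - b| := by
    rw [← abs_of_pos hpos, ← abs_mul, key]
  have h3 : |Real.sqrt a - Real.sqrt b| = |a - b| / (Real.sqrt a + Real.sqrt b) := by
    rw [eq_div_iff hpos.ne']
    exact habs
  rw [h3]
  gcongr



lemma gcov_nonneg (K C ζ ρ : ℝ) (hK : 0 ≤ K) (hC : 0 ≤ C) : 0 ≤ gcov K C ζ ρ := by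
  rw [gcov]
  have h1 : 0 ≤ Dlt 0 K * Dlt ζ C := mul_nonneg (Dlt_nonneg hK) (Dlt_nonneg hC)
  have h2 : 0 ≤ ∫ z in Set.Icc (-K) K,
      (1 - Dlt ((ζ + ρ * z) / Real.sqrt (1 - ρ ^ 2)) (C / Real.sqrt (1 - ρ ^ 2))) *
        gaussianPDFReal 0 1 z :=
    integral_nonneg fun z => mul_nonneg (by have := Dlt_le_one ((ζ + ρ * z) / Real.sqrt (1 - ρ ^ 2)) (C / Real.sqrt (1 - ρ ^ 2)); linarith)
      (gaussianPDFReal_nonneg 0 1 z)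
  linarith

lemma gcov_bddBelow (K C ρ : ℝ) (hK : 0 ≤ K) (hC : 0 ≤ C) :
    BddBelow (Set.range fun ζ => gcov K C ζ ρ) := by
  refine ⟨0, ?_⟩
  rintro y ⟨ζ, rfl⟩
  exact gcov_nonneg K C ζ ρ hK hC

lemma gcov_zero (K C ζ : ℝ) (hK : 0 ≤ K) : gcov K C ζ 0 = Dlt 0 K := by
  have hs : Real.sqrt (1 - (0:ℝ) ^ 2) = 1 := by norm_num
  have h1 : ∀ z : ℝ, (1 - Dlt ((ζ + 0 * z) / Real.sqrt (1 - (0:ℝ) ^ 2))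
      ((C : ℝ) / Real.sqrt (1 - (0:ℝ) ^ 2))) * gaussianPDFReal 0 1 z
      = (1 - Dlt ζ C) * gaussianPDFReal 0 1 z := by
    intro z; rw [hs]; norm_num
  rw [gcov]
  simp_rw [h1]
  rw [MeasureTheory.integral_const_mul, integral_pdf_Icc K hK]
  have hD : Dlt 0 K = Phi K - Phi (-K) := by rw [Dlt, zero_add, zero_sub]
  rw [← hD]
  ring

lemma minCov_zero (K C : ℝ) (hK : 0 ≤ K) : minCov K C 0 = 2 * Phi K - 1 := by
  rw [minCov]
  have : ∀ ζ : ℝ, gcov K C ζ 0 = Dlt 0 K := fun ζ => gcov_zero K C ζ hK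
  simp_rw [this]
  rw [ciInf_const, Dlt, zero_add, zero_sub, Phi_neg]
  ring

lemma ciInf_abs_sub_le {f g : ℝ → ℝ} (hf : ∀ ζ, 0 ≤ f ζ) (hg : ∀ ζ, 0 ≤ g ζ)
    {ε : ℝ} (h : ∀ ζ, |f ζ - g ζ| ≤ ε) : |(⨅ ζ, f ζ) - ⨅ ζ, g ζ| ≤ ε := by
  have bf : BddBelow (Set.range f) := ⟨0, by rintro y ⟨ζ, rfl⟩; exact hf ζ⟩
  have bg : BddBelow (Set.range g) := ⟨0, by rintro y ⟨ζ, rfl⟩; exact hg ζ⟩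
  have h1 : (⨅ ζ, f ζ) - ε ≤ ⨅ ζ, g ζ := by
    apply le_ciInf
    intro ζ
    have h3 := (abs_le.1 (h ζ)).2
    have h4 : (⨅ ζ, f ζ) ≤ f ζ := ciInf_le bf ζ
    linarith
  have h2 : (⨅ ζ, g ζ) - ε ≤ ⨅ ζ, f ζ := by
    apply le_ciInf
    intro ζ
    have h3 := (abs_le.1 (h ζ)).1
    have h4 : (⨅ ζ, g ζ) ≤ g ζ := ciInf_le bg ζ
    linarith
  exact abs_le.2 ⟨by linarith, by linarith⟩

lemma integral_diff_bound {K ε : ℝ} (hε : 0 ≤ ε) {F G : ℝ → ℝ}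
    (hF : IntegrableOn F (Set.Icc (-K) K)) (hG : IntegrableOn G (Set.Icc (-K) K))
    (h : ∀ z ∈ Set.Icc (-K) K, |F z - G z| ≤ ε * gaussianPDFReal 0 1 z) :
    |(∫ z in Set.Icc (-K) K, F z) - ∫ z in Set.Icc (-K) K, G z| ≤ ε := by
  rw [← integral_sub hF hG]
  have h1 : |∫ z in Set.Icc (-K) K, (F z - G z)| ≤ ∫ z in Set.Icc (-K) K, |F z - G z| := by
    simpa [Real.norm_eq_abs] using MeasureTheory.norm_integral_le_integral_norm
      (μ := volume.restrict (Set.Icc (-K) K)) (fun z => F z - G z)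
  have h2 : ∫ z in Set.Icc (-K) K, |F z - G z|
      ≤ ∫ z in Set.Icc (-K) K, ε * gaussianPDFReal 0 1 z :=
    setIntegral_mono_on (hF.sub hG).abs ((pdf_integrable.const_mul ε).integrableOn)
      measurableSet_Icc h
  have h3 : ∫ z in Set.Icc (-K) K, ε * gaussianPDFReal 0 1 z
      = ε * ∫ z in Set.Icc (-K) K, gaussianPDFReal 0 1 z := MeasureTheory.integral_const_mul ε _
  have h4 : ∫ z in Set.Icc (-K) K, gaussianPDFReal 0 1 z ≤ 1 := by
    have := setIntegral_le_integral (s := Set.Icc (-K) K) pdf_integrable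
      (Filter.Eventually.of_forall fun t => gaussianPDFReal_nonneg 0 1 t)
    rwa [integral_gaussianPDFReal_eq_one 0 one_ne_zero] at this
  have h5 : 0 ≤ ∫ z in Set.Icc (-K) K, gaussianPDFReal 0 1 z :=
    integral_nonneg fun t => gaussianPDFReal_nonneg 0 1 t
  calc |∫ z in Set.Icc (-K) K, (F z - G z)| ≤ _ := h1
    _ ≤ ε * ∫ z in Set.Icc (-K) K, gaussianPDFReal 0 1 z := h2.trans_eq h3
    _ ≤ ε * 1 := mul_le_mul_of_nonneg_left h4 hε
    _ = ε := mul_one ε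


lemma key_est (K C : ℝ) (hK : 0 < K) (hC : 0 < C) (ρ₀ : ℝ) (h₀ : ρ₀ ∈ Set.Ioo (-1:ℝ) 1)
    {ε : ℝ} (hε : 0 < ε) :
    ∃ δ > 0, ∀ ρ : ℝ, |ρ - ρ₀| < δ → ∀ ζ z : ℝ, |z| ≤ K →
      |Dlt ((ζ + ρ * z) / Real.sqrt (1 - ρ ^ 2)) (C / Real.sqrt (1 - ρ ^ 2))
        - Dlt ((ζ + ρ₀ * z) / Real.sqrt (1 - ρ₀ ^ 2)) (C / Real.sqrt (1 - ρ₀ ^ 2))| ≤ ε := by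
  obtain ⟨h₀l, h₀r⟩ := h₀
  have hsq : ρ₀ ^ 2 < 1 := by nlinarith
  set q : ℝ := (1 - ρ₀ ^ 2) / 2 with hqdef
  have hq0 : 0 < q := by rw [hqdef]; linarith
  set m : ℝ := Real.sqrt q with hmdef
  have hm : 0 < m := Real.sqrt_pos.2 hq0
  set δ₁ : ℝ := min 1 ((1 - ρ₀ ^ 2) / 6) with hδ₁def
  have hδ₁0 : 0 < δ₁ := lt_min one_pos (by linarith)
  have claimB : ∀ ρ : ℝ, |ρ - ρ₀| ≤ δ₁ → |ρ ^ 2 - ρ₀ ^ 2| ≤ 3 * |ρ - ρ₀| := by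
    intro ρ hρ
    have h1 : |ρ - ρ₀| ≤ 1 := hρ.trans (min_le_left _ _)
    have hρ₀abs : |ρ₀| ≤ 1 := by rw [abs_le]; constructor <;> linarith
    have h3 : |ρ + ρ₀| ≤ 3 := by
      rw [show ρ + ρ₀ = (ρ - ρ₀) + 2 * ρ₀ by ring]
      calc |(ρ - ρ₀) + 2 * ρ₀| ≤ |ρ - ρ₀| + |2 * ρ₀| := abs_add_le _ _
        _ ≤ 1 + 2 * 1 := by rw [abs_mul]; have : |(2:ℝ)| = 2 := by norm_num
                            rw [this]; nlinarith
        _ = 3 := by norm_num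
    calc |ρ ^ 2 - ρ₀ ^ 2| = |ρ + ρ₀| * |ρ - ρ₀| := by rw [sq_sub_sq, abs_mul]
      _ ≤ 3 * |ρ - ρ₀| := mul_le_mul_of_nonneg_right h3 (abs_nonneg _)
  have claimA : ∀ ρ : ℝ, |ρ - ρ₀| ≤ δ₁ → q ≤ 1 - ρ ^ 2 := by
    intro ρ hρ
    have h2 : |ρ - ρ₀| ≤ (1 - ρ₀ ^ 2) / 6 := hρ.trans (min_le_right _ _)
    have h4 : |ρ ^ 2 - ρ₀ ^ 2| ≤ (1 - ρ₀ ^ 2) / 2 := by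
      calc |ρ ^ 2 - ρ₀ ^ 2| ≤ 3 * |ρ - ρ₀| := claimB ρ hρ
        _ ≤ 3 * ((1 - ρ₀ ^ 2) / 6) := by linarith
        _ = (1 - ρ₀ ^ 2) / 2 := by ring
    have h5 := (abs_le.1 h4).2
    rw [hqdef]; linarith
  obtain ⟨T, hT⟩ := Metric.tendsto_atTop.1 Phi_tendsto (ε / 4) (by positivity)
  set M : ℝ := |T| + K + C / m + 1 with hMdef
  have hM0 : 0 < M := by
    have h1 : (0:ℝ) ≤ |T| := abs_nonneg T
    have h2 : 0 < C / m := div_pos hC hm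
    rw [hMdef]; linarith
  -- tail bound
  have tail : ∀ ρ ζ z : ℝ, |ρ - ρ₀| ≤ δ₁ → |z| ≤ K → M ≤ |ζ| →
      Dlt ((ζ + ρ * z) / Real.sqrt (1 - ρ ^ 2)) (C / Real.sqrt (1 - ρ ^ 2)) ≤ ε / 4 := by
    intro ρ ζ z hρ hz hζ
    have hA := claimA ρ hρ
    have hms : m ≤ Real.sqrt (1 - ρ ^ 2) := by
      rw [hmdef]; exact Real.sqrt_le_sqrt hA
    set s : ℝ := Real.sqrt (1 - ρ ^ 2) with hs
    have hs0 : 0 < s := hm.trans_le hms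
    have hs1 : s ≤ 1 := by
      rw [hs]
      calc Real.sqrt (1 - ρ ^ 2) ≤ Real.sqrt 1 :=
            Real.sqrt_le_sqrt (by nlinarith [sq_nonneg ρ])
        _ = 1 := Real.sqrt_one
    have hρ1 : |ρ| ≤ 1 := by
      have h6 : 0 ≤ 1 - ρ ^ 2 := le_trans hq0.le hA
      rw [abs_le]; constructor <;> nlinarith
    have hnum : M - K ≤ |ζ + ρ * z| := by
      have h6 : |ζ| - |-(ρ * z)| ≤ |ζ - -(ρ * z)| := abs_sub_abs_le_abs_sub _ _
      rw [abs_neg, sub_neg_eq_add] at h6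
      have h7 : |ρ * z| ≤ K := by
        rw [abs_mul]
        calc |ρ| * |z| ≤ 1 * K := mul_le_mul hρ1 hz (abs_nonneg _) one_pos.le
          _ = K := one_mul K
      linarith
    have habs : |(ζ + ρ * z) / s| = |ζ + ρ * z| / s := by rw [abs_div, abs_of_pos hs0]
    have hxl : M - K ≤ |(ζ + ρ * z) / s| := by
      rw [habs]
      have h8 : |ζ + ρ * z| ≤ |ζ + ρ * z| / s := by
        rw [le_div_iff₀ hs0]
        nlinarith [abs_nonneg (ζ + ρ * z)]
      exact le_trans hnum h8
    have hcs : C / s ≤ C / m := by gcongr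
    have harg : T ≤ |(ζ + ρ * z) / s| - C / s := by
      have h9 : T ≤ |T| := le_abs_self T
      have : M - K - C / m ≤ |(ζ + ρ * z) / s| - C / s := by linarith
      rw [hMdef] at this
      linarith
    have h10 := hT T le_rfl
    rw [Real.dist_eq] at h10
    have h11 := (abs_lt.1 h10).1
    calc Dlt ((ζ + ρ * z) / s) (C / s) ≤ 1 - Phi (|(ζ + ρ * z) / s| - C / s) :=
        Dlt_tail_abs _ _
      _ ≤ 1 - Phi T := by have := Phi_mono harg; linarith
      _ ≤ ε / 4 := by linarith
  -- Lipschitz constant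
  set L : ℝ := 2 * (K / m + 3 * (M + K) / (2 * m ^ 3) + 3 * C / (2 * m ^ 3)) with hLdef
  have hL0 : 0 ≤ L := by
    have h1 : 0 < m ^ 3 := by positivity
    have h2 : 0 < M + K := by linarith
    rw [hLdef]; positivity
  refine ⟨min δ₁ (ε / (L + 1)), lt_min hδ₁0 (by positivity), ?_⟩
  intro ρ hρ ζ z hz
  have hρδ₁ : |ρ - ρ₀| ≤ δ₁ := (hρ.trans_le (min_le_left _ _)).le
  have hρδ₂ : |ρ - ρ₀| ≤ ε / (L + 1) := (hρ.trans_le (min_le_right _ _)).le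
  have hself : |ρ₀ - ρ₀| ≤ δ₁ := by simp [hδ₁0.le]
  have hA := claimA ρ hρδ₁
  have hA₀ := claimA ρ₀ hself
  have hmu : m ≤ Real.sqrt (1 - ρ ^ 2) := by rw [hmdef]; exact Real.sqrt_le_sqrt hA
  have hmv : m ≤ Real.sqrt (1 - ρ₀ ^ 2) := by rw [hmdef]; exact Real.sqrt_le_sqrt hA₀
  set u : ℝ := Real.sqrt (1 - ρ ^ 2) with hu
  set v : ℝ := Real.sqrt (1 - ρ₀ ^ 2) with hv
  have hu0 : 0 < u := hm.trans_le hmu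
  have hv0 : 0 < v := hm.trans_le hmv
  by_cases hζ : M ≤ |ζ|
  · have t1 := tail ρ ζ z hρδ₁ hz hζ
    have t2 := tail ρ₀ ζ z hself hz hζ
    have n1 : 0 ≤ Dlt ((ζ + ρ * z) / u) (C / u) :=
      Dlt_nonneg (div_nonneg hC.le hu0.le)
    have n2 : 0 ≤ Dlt ((ζ + ρ₀ * z) / v) (C / v) :=
      Dlt_nonneg (div_nonneg hC.le hv0.le)
    rw [abs_le]
    constructor <;> [skip; skip] <;> simp only [hu, hv] at t1 t2 n1 n2 ⊢ <;> linarith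
  · push_neg at hζ
    have huv : |u - v| ≤ 3 * |ρ - ρ₀| / (2 * m) := by
      have h1 := sqrt_diff (1 - ρ ^ 2) (1 - ρ₀ ^ 2) m (le_trans hq0.le hA)
        (le_trans hq0.le hA₀) hm hmu hmv
      have h2 : |1 - ρ ^ 2 - (1 - ρ₀ ^ 2)| = |ρ ^ 2 - ρ₀ ^ 2| := by
        rw [show (1 - ρ ^ 2 - (1 - ρ₀ ^ 2)) = -(ρ ^ 2 - ρ₀ ^ 2) by ring, abs_neg]
      rw [h2] at h1
      calc |u - v| ≤ |ρ ^ 2 - ρ₀ ^ 2| / (m + m) := h1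
        _ ≤ 3 * |ρ - ρ₀| / (2 * m) := by
            rw [show m + m = 2 * m by ring]
            gcongr
            exact claimB ρ hρδ₁
    have hζM : |ζ| ≤ M := hζ.le
    have hρ₀1 : |ρ₀| ≤ 1 := by rw [abs_le]; constructor <;> linarith
    have hB : |ζ + ρ₀ * z| ≤ M + K := by
      calc |ζ + ρ₀ * z| ≤ |ζ| + |ρ₀ * z| := abs_add_le _ _
        _ ≤ M + K := by
            rw [abs_mul]
            have : |ρ₀| * |z| ≤ 1 * K := mul_le_mul hρ₀1 hz (abs_nonneg _) one_pos.le
            linarith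
    have hnumd : |ζ + ρ * z - (ζ + ρ₀ * z)| ≤ K * |ρ - ρ₀| := by
      rw [show ζ + ρ * z - (ζ + ρ₀ * z) = (ρ - ρ₀) * z by ring, abs_mul]
      calc |ρ - ρ₀| * |z| ≤ |ρ - ρ₀| * K := by gcongr
        _ = K * |ρ - ρ₀| := mul_comm _ _
    have hx := divBound (ζ + ρ * z) (ζ + ρ₀ * z) u v m hm hmu hmv
    have hc := divBound C C u v m hm hmu hmv
    have hx2 : |(ζ + ρ * z) / u - (ζ + ρ₀ * z) / v|
        ≤ K * |ρ - ρ₀| / m + (M + K) * (3 * |ρ - ρ₀| / (2 * m)) / (m * m) := by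
      calc |(ζ + ρ * z) / u - (ζ + ρ₀ * z) / v|
          ≤ |ζ + ρ * z - (ζ + ρ₀ * z)| / m + |ζ + ρ₀ * z| * |u - v| / (m * m) := hx
        _ ≤ K * |ρ - ρ₀| / m + (M + K) * (3 * |ρ - ρ₀| / (2 * m)) / (m * m) := by
            gcongr
    have hc2 : |C / u - C / v| ≤ C * (3 * |ρ - ρ₀| / (2 * m)) / (m * m) := by
      have h0 : |C - C| = 0 := by simp
      calc |C / u - C / v| ≤ |C - C| / m + |C| * |u - v| / (m * m) := hc
        _ = C * |u - v| / (m * m) := by rw [h0, abs_of_pos hC]; ring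
        _ ≤ C * (3 * |ρ - ρ₀| / (2 * m)) / (m * m) := by gcongr
    have hlip := Dlt_lip ((ζ + ρ * z) / u) (C / u) ((ζ + ρ₀ * z) / v) (C / v)
    have hLd : L * |ρ - ρ₀| ≤ ε := by
      have hd1 : |ρ - ρ₀| * (L + 1) ≤ ε := by
        rw [← le_div_iff₀ (by positivity : (0:ℝ) < L + 1)]
        exact hρδ₂
      nlinarith [abs_nonneg (ρ - ρ₀)]
    have hfin : K * |ρ - ρ₀| / m + (M + K) * (3 * |ρ - ρ₀| / (2 * m)) / (m * m)
        + C * (3 * |ρ - ρ₀| / (2 * m)) / (m * m)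
        + (K * |ρ - ρ₀| / m + (M + K) * (3 * |ρ - ρ₀| / (2 * m)) / (m * m)
        + C * (3 * |ρ - ρ₀| / (2 * m)) / (m * m)) = L * |ρ - ρ₀| := by
      rw [hLdef]
      field_simp
      ring
    calc |Dlt ((ζ + ρ * z) / u) (C / u) - Dlt ((ζ + ρ₀ * z) / v) (C / v)|
        ≤ (|(ζ + ρ * z) / u - (ζ + ρ₀ * z) / v| + |C / u - C / v|)
          + (|(ζ + ρ * z) / u - (ζ + ρ₀ * z) / v| + |C / u - C / v|) := hlip
      _ ≤ L * |ρ - ρ₀| := by rw [← hfin]; linarith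
      _ ≤ ε := hLd


lemma integrand_integrable (K C ζ ρ : ℝ) :
    IntegrableOn (fun z =>
      (1 - Dlt ((ζ + ρ * z) / Real.sqrt (1 - ρ ^ 2)) (C / Real.sqrt (1 - ρ ^ 2))) *
        gaussianPDFReal 0 1 z) (Set.Icc (-K) K) := by
  apply Continuous.integrableOn_Icc
  apply Continuous.mul
  · apply Continuous.sub continuous_const
    apply Dlt_cont_comp
    fun_prop
  · exact pdf_continuous

lemma gcov_key (K C : ℝ) (hK : 0 < K) (hC : 0 < C) (ρ₀ : ℝ)
    (h₀ : ρ₀ ∈ Set.Ioo (-1:ℝ) 1) {ε : ℝ} (hε : 0 < ε) :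
    ∃ δ > 0, ∀ ρ : ℝ, |ρ - ρ₀| < δ → ∀ ζ : ℝ,
      |gcov K C ζ ρ - gcov K C ζ ρ₀| ≤ ε := by
  obtain ⟨δ, hδ0, hδ⟩ := key_est K C hK hC ρ₀ h₀ hε
  refine ⟨δ, hδ0, ?_⟩
  intro ρ hρ ζ
  have h1 : gcov K C ζ ρ - gcov K C ζ ρ₀
      = (∫ z in Set.Icc (-K) K,
          (1 - Dlt ((ζ + ρ * z) / Real.sqrt (1 - ρ ^ 2)) (C / Real.sqrt (1 - ρ ^ 2))) *
            gaussianPDFReal 0 1 z)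
        - ∫ z in Set.Icc (-K) K,
          (1 - Dlt ((ζ + ρ₀ * z) / Real.sqrt (1 - ρ₀ ^ 2)) (C / Real.sqrt (1 - ρ₀ ^ 2))) *
            gaussianPDFReal 0 1 z := by
    rw [gcov, gcov]; ring
  rw [h1]
  apply integral_diff_bound hε.le (integrand_integrable K C ζ ρ) (integrand_integrable K C ζ ρ₀)
  intro z hz
  obtain ⟨hz1, hz2⟩ := Set.mem_Icc.1 hz
  have hzK : |z| ≤ K := abs_le.2 ⟨hz1, hz2⟩
  have h2 := hδ ρ hρ ζ z hzK
  have h3 : (1 - Dlt ((ζ + ρ * z) / Real.sqrt (1 - ρ ^ 2)) (C / Real.sqrt (1 - ρ ^ 2))) *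
        gaussianPDFReal 0 1 z
      - (1 - Dlt ((ζ + ρ₀ * z) / Real.sqrt (1 - ρ₀ ^ 2)) (C / Real.sqrt (1 - ρ₀ ^ 2))) *
        gaussianPDFReal 0 1 z
      = (Dlt ((ζ + ρ₀ * z) / Real.sqrt (1 - ρ₀ ^ 2)) (C / Real.sqrt (1 - ρ₀ ^ 2))
        - Dlt ((ζ + ρ * z) / Real.sqrt (1 - ρ ^ 2)) (C / Real.sqrt (1 - ρ ^ 2))) *
        gaussianPDFReal 0 1 z := by ring
  rw [h3, abs_mul, abs_of_nonneg (gaussianPDFReal_nonneg 0 1 z)]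
  have h4 : |Dlt ((ζ + ρ₀ * z) / Real.sqrt (1 - ρ₀ ^ 2)) (C / Real.sqrt (1 - ρ₀ ^ 2))
      - Dlt ((ζ + ρ * z) / Real.sqrt (1 - ρ ^ 2)) (C / Real.sqrt (1 - ρ ^ 2))| ≤ ε := by
    rw [abs_sub_comm]; exact h2
  exact mul_le_mul_of_nonneg_right h4 (gaussianPDFReal_nonneg 0 1 z)

/-- in the known-variance two-nested-model setting, the minimal coverage
probability `inf_ζ g(ζ,ρ)` of the naive-type interval for `β_{1·M̂}` is continuous in `ρ`
on `(−1,1)` and equals `Δ(0,K) = 2Φ(K) − 1` at `ρ = 0`; consequently, for `K = K_N` (the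
`(1−α/2)`-quantile of `N(0,1)`) and `ρ = 0` the naive interval has exact minimal coverage
`1 − α`. -/
theorem minimal_coverage_continuous_and_exact_at_rho_zero
    (K C : ℝ) (hK : 0 < K) (hC : 0 < C)
    (α : ℝ) (hα : 0 < α) (hα1 : α < 1)
    (KN : ℝ) (hKN : Phi KN = 1 - α / 2) :
    ContinuousOn (fun ρ => minCov K C ρ) (Set.Ioo (-1 : ℝ) 1) ∧
    minCov K C 0 = 2 * Phi K - 1 ∧
    minCov KN C 0 = 1 - α := by
  refine ⟨?_, minCov_zero K C hK.le, ?_⟩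
  · intro ρ₀ h₀
    apply ContinuousAt.continuousWithinAt
    rw [Metric.continuousAt_iff]
    intro ε hε
    obtain ⟨δ, hδ0, hδ⟩ := gcov_key K C hK hC ρ₀ h₀ (half_pos hε)
    refine ⟨δ, hδ0, ?_⟩
    intro ρ hρ
    rw [Real.dist_eq] at hρ ⊢
    have h1 : |minCov K C ρ - minCov K C ρ₀| ≤ ε / 2 := by
      rw [minCov, minCov]
      exact ciInf_abs_sub_le (fun ζ => gcov_nonneg K C ζ ρ hK.le hC.le)
        (fun ζ => gcov_nonneg K C ζ ρ₀ hK.le hC.le) (hδ ρ hρ)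
    linarith
  · have hKN0 : 0 ≤ KN := by
      by_contra h
      push_neg at h
      have := Phi_mono h.le
      rw [Phi_zero, hKN] at this
      linarith
    rw [minCov_zero KN C hKN0, hKN]
    ring
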